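/- Modica–Mortola lower bound: Let V : ℝ → ℝ be continuous with V(s) ≥ 0 for all s, let a < b be real numbers, and let u : ℝ → ℝ be continuously differentiable. Define Φ(v) = ∫_0^v √(2·V(s)) ds. Then ∫_a^b ( (1/2)·(u'(x))² + V(u(x)) ) dx ≥ |Φ(u(b)) − Φ(u(a))|. -/

import Mathlib

open MeasureTheory

/-- Modica–Mortola lower bound: for continuous nonnegative `V`, `a < b`, and `u` of class `C¹`,
the energy `∫_a^b ((1/2) u'² + V(u))` dominates `|Φ(u b) − Φ(u a)|`, where
`Φ(v) = ∫_0^v √(2 V(s)) ds`. -/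
theorem modica_mortola_lower_bound
    (V : ℝ → ℝ) (hVc : Continuous V) (hV0 : ∀ s, 0 ≤ V s)
    (a b : ℝ) (hab : a < b)
    (u : ℝ → ℝ) (hu : ContDiff ℝ 1 u) :
    |(∫ s in (0:ℝ)..(u b), Real.sqrt (2 * V s)) -
        (∫ s in (0:ℝ)..(u a), Real.sqrt (2 * V s))| ≤
      ∫ x in a..b, ((1/2) * (deriv u x)^2 + V (u x)) := by
  set g : ℝ → ℝ := fun s => Real.sqrt (2 * V s) with hg
  have hgc : Continuous g := (continuous_const.mul hVc).sqrt
  have hud : Differentiable ℝ u := hu.differentiable one_ne_zero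
  have hud' : Continuous (deriv u) := hu.continuous_deriv le_rfl
  set Φ : ℝ → ℝ := fun v => ∫ s in (0:ℝ)..v, g s with hΦ
  have hderiv : ∀ x, HasDerivAt (Φ ∘ u) (g (u x) * deriv u x) x := by
    intro x
    exact ((hgc.integral_hasStrictDerivAt 0 (u x)).hasDerivAt.comp x
      (hud x).hasDerivAt)
  have hint : IntervalIntegrable (fun x => g (u x) * deriv u x) volume a b :=
    ((hgc.comp hud.continuous).mul hud').intervalIntegrable a b
  have key : Φ (u b) - Φ (u a) = ∫ x in a..b, g (u x) * deriv u x := by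
    exact (intervalIntegral.integral_eq_sub_of_hasDerivAt
      (fun x _ => hderiv x) hint).symm
  rw [show |(∫ s in (0:ℝ)..(u b), g s) - (∫ s in (0:ℝ)..(u a), g s)|
      = |Φ (u b) - Φ (u a)| from rfl, key]
  calc |∫ x in a..b, g (u x) * deriv u x|
      ≤ ∫ x in a..b, |g (u x) * deriv u x| :=
        intervalIntegral.abs_integral_le_integral_abs hab.le
    _ ≤ ∫ x in a..b, ((1/2) * (deriv u x)^2 + V (u x)) := by
        apply intervalIntegral.integral_mono_on hab.le
        · exact hint.abs
        · exact ((continuous_const.mul (hud'.pow 2)).add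
            (hVc.comp hud.continuous)).intervalIntegrable a b
        · intro x _
          have h1 : 0 ≤ 2 * V (u x) := by linarith [hV0 (u x)]
          have h2 : (g (u x))^2 = 2 * V (u x) := Real.sq_sqrt h1
          have h3 : 0 ≤ g (u x) := Real.sqrt_nonneg _
          rw [abs_mul, abs_of_nonneg h3]
          nlinarith [sq_nonneg (g (u x) - |deriv u x|), sq_abs (deriv u x)]
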